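/- Let G be a vertex-transitive graph with adjacency matrix A and H(t) = exp(−itA). If for some fixed vertex u there exist a sequence t_k and γ with |γ| = 1 such that H(t_k)e_u → γe_u, then H(t_k) → γI (G is almost periodic). -/

import Mathlib

open Matrix Complex Filter Topology

attribute [local instance] Matrix.linftyOpNormedRing Matrix.linftyOpNormedAlgebra

/-- Transition matrix `H(t) = exp(-itA)`. -/
noncomputable def transM {V : Type*} [Fintype V] [DecidableEq V]
    (A : Matrix V V ℂ) (t : ℝ) : Matrix V V ℂ :=
  NormedSpace.exp ((-(t : ℂ) * Complex.I) • A)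

/-- The standard basis vector `e_u`. -/
def eVec {V : Type*} [Fintype V] [DecidableEq V] (u : V) : V → ℂ := Pi.single u 1

section aux
variable {V : Type*} [Fintype V] [DecidableEq V]

/-- Permutation matrix of an equivalence. -/
def permM (φ : V ≃ V) : Matrix V V ℂ := Matrix.of fun i j => if i = φ j then 1 else 0

lemma permM_mulVec_single (φ : V ≃ V) (u : V) :
    permM φ *ᵥ eVec u = eVec (φ u) := by
  ext i
  simp [permM, mulVec, dotProduct, eVec, Pi.single_apply]

lemma commute_adj (G : SimpleGraph V) [DecidableRel G.Adj] (φ : G ≃g G) :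
    Commute (G.adjMatrix ℂ) (permM φ.toEquiv) := by
  show _ * _ = _ * _
  ext i j
  have hcond : ∀ k, (i = φ.toEquiv k) = (k = φ.toEquiv.symm i) := fun k =>
    propext ⟨fun h => by rw [h, Equiv.symm_apply_apply],
             fun h => by rw [h, Equiv.apply_symm_apply]⟩
  simp only [Matrix.mul_apply, permM, Matrix.of_apply, mul_ite, mul_one, mul_zero,
    ite_mul, one_mul, zero_mul, hcond, Finset.sum_ite_eq', Finset.mem_univ, if_true]
  have hiff : G.Adj i (φ.toEquiv j) ↔ G.Adj (φ.toEquiv.symm i) j := by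
    nth_rewrite 1 [← φ.toEquiv.apply_symm_apply i]
    exact φ.map_adj_iff
  simp only [SimpleGraph.adjMatrix_apply]
  rw [if_congr hiff rfl rfl]

lemma commute_transM (G : SimpleGraph V) [DecidableRel G.Adj] (φ : G ≃g G) (s : ℝ) :
    Commute (transM (G.adjMatrix ℂ) s) (permM φ.toEquiv) := by
  exact ((commute_adj G φ).smul_left _).exp_left

end aux

/-- For a vertex-transitive graph, if `H(t_k)e_u → γ e_u` at one vertex `u`,
then `H(t_k) → γ I` (almost periodicity). -/
theorem vertex_transitive_almost_periodic {V : Type*} [Fintype V] [DecidableEq V]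
    (G : SimpleGraph V) [DecidableRel G.Adj]
    (htrans : ∀ a b : V, ∃ φ : G ≃g G, φ a = b)
    (u : V) (t : ℕ → ℝ) (γ : ℂ) (hγ : ‖γ‖ = 1)
    (hu : Tendsto (fun k => transM (G.adjMatrix ℂ) (t k) *ᵥ eVec u) atTop
      (nhds (γ • eVec u))) :
    Tendsto (fun k => transM (G.adjMatrix ℂ) (t k)) atTop
      (nhds (γ • (1 : Matrix V V ℂ))) := by
  set A := G.adjMatrix ℂ with hA
  -- columns converge
  have hcol : ∀ b : V, Tendsto (fun k => transM A (t k) *ᵥ eVec b) atTop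
      (nhds (γ • eVec b)) := by
    intro b
    obtain ⟨φ, hφ⟩ := htrans u b
    have hb : eVec b = permM φ.toEquiv *ᵥ eVec u := by
      rw [permM_mulVec_single]
      exact congrArg eVec hφ.symm
    have key : ∀ k, transM A (t k) *ᵥ eVec b
        = permM φ.toEquiv *ᵥ (transM A (t k) *ᵥ eVec u) := by
      intro k
      rw [hb, Matrix.mulVec_mulVec, Matrix.mulVec_mulVec,
        (commute_transM G φ (t k)).eq]
    have hcont : Continuous fun x : V → ℂ => permM φ.toEquiv *ᵥ x :=
      (Matrix.mulVecLin (permM φ.toEquiv)).continuous_of_finiteDimensional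
    have := (hcont.tendsto _).comp hu
    simp only [Function.comp_def] at this
    have hlim : permM φ.toEquiv *ᵥ (γ • eVec u) = γ • eVec b := by
      rw [Matrix.mulVec_smul, ← hb]
    rw [← hlim]
    simpa only [key] using this
  -- outer product linear map
  let L : V → ((V → ℂ) →ₗ[ℂ] Matrix V V ℂ) := fun b =>
    { toFun := fun x => Matrix.vecMulVec x (eVec b)
      map_add' := by
        intro x y; ext i j; simp [Matrix.vecMulVec_apply, add_mul]
      map_smul' := by
        intro c x; ext i j; simp [Matrix.vecMulVec_apply, mul_assoc] }
  have hdecomp : ∀ k, transM A (t k) = ∑ b, L b (transM A (t k) *ᵥ eVec b) := by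
    intro k
    ext i j
    simp only [L, Matrix.sum_apply, LinearMap.coe_mk, AddHom.coe_mk,
      Matrix.vecMulVec_apply, Matrix.mulVec, dotProduct, eVec, Pi.single_apply,
      mul_ite, mul_one, mul_zero, Finset.sum_ite_eq', Finset.mem_univ, if_true]
    rw [Finset.sum_eq_single j (fun x _ hx => by simp [Ne.symm hx]) (by simp)]
    simp
  have hsum : Tendsto (fun k => ∑ b, L b (transM A (t k) *ᵥ eVec b)) atTop
      (nhds (∑ b, L b (γ • eVec b))) := by
    refine tendsto_finset_sum _ fun b _ => ?_
    exact (((L b).continuous_of_finiteDimensional).tendsto _).comp (hcol b)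
  have hfinal : ∑ b, L b (γ • eVec b) = γ • (1 : Matrix V V ℂ) := by
    ext i j
    simp only [L, Matrix.sum_apply, LinearMap.coe_mk, AddHom.coe_mk,
      Matrix.vecMulVec_apply, Pi.smul_apply, smul_eq_mul, Matrix.smul_apply,
      Matrix.one_apply, eVec, Pi.single_apply]
    simp only [mul_ite, mul_one, mul_zero, ite_mul, zero_mul,
      Finset.sum_ite_eq', Finset.mem_univ, if_true]
    split <;> rename_i h
    all_goals rw [Finset.sum_eq_single j (fun x _ hx => if_neg (Ne.symm hx)) (by simp)]
    · simp [h]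
    · simp [h]
  rw [← hfinal]
  simpa only [← hdecomp] using hsum
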